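/- Let $v_0$ be $\lambda$-discretely self-similar ($v_0(x)=\lambda v_0(\lambda x)$ a.e.) with $\lambda>1$, and suppose there exists $R_*>0$ and $\epsilon>0$ such that $\int_{B_1(x)}|v_0|^2 \le \epsilon/\lambda$ whenever $|x|\ge R_*$. Then with $\mu = 1/(\lambda R_*)$, for every $x_0 \ne 0$ and every $r \in (0, \mu|x_0|]$ one has $\frac{1}{r}\int_{B_r(x_0)}|v_0|^2\,dx \le \epsilon$. -/

import Mathlib

open MeasureTheory Metric Pointwise

abbrev E3 := EuclideanSpace ℝ (Fin 3)

lemma dss_step (v₀ : E3 → E3) (l : ℝ) (hl : 1 < l)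
    (hdss : ∀ᵐ x : E3, v₀ x = l • v₀ (l • x)) (y : E3) (s : ℝ) :
    ∫ x in ball (l • y) (l * s), ‖v₀ x‖^2 = l * ∫ x in ball y s, ‖v₀ x‖^2 := by
  have hl0 : (0:ℝ) < l := lt_trans one_pos hl
  have h1 : ∫ x in ball y s, ‖v₀ x‖^2 = ∫ x in ball y s, l^2 * ‖v₀ (l • x)‖^2 := by
    refine setIntegral_congr_ae measurableSet_ball ?_
    filter_upwards [hdss] with x hx _
    rw [hx, norm_smul, mul_pow, Real.norm_eq_abs, sq_abs]
  have h2 : ∫ x in ball y s, ‖v₀ (l • x)‖^2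
      = (l ^ 3)⁻¹ * ∫ x in l • ball y s, ‖v₀ x‖^2 := by
    have := Measure.setIntegral_comp_smul_of_pos (volume : Measure E3)
      (fun z => ‖v₀ z‖^2) (ball y s) hl0
    rw [this, finrank_euclideanSpace_fin, smul_eq_mul]
  have hball : l • ball y s = ball (l • y) (l * s) := by
    rw [_root_.smul_ball (ne_of_gt hl0), Real.norm_eq_abs, abs_of_pos hl0]
  rw [h1, integral_const_mul, h2, hball]
  field_simp
lemma dss_zstep (v₀ : E3 → E3) (l : ℝ) (hl : 1 < l)
    (hdss : ∀ᵐ x : E3, v₀ x = l • v₀ (l • x)) :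
    ∀ n : ℤ, ∀ y : E3, ∀ s : ℝ,
      ∫ x in ball ((l ^ n) • y) (l ^ n * s), ‖v₀ x‖^2
        = l ^ n * ∫ x in ball y s, ‖v₀ x‖^2 := by
  have hl0 : (0:ℝ) < l := lt_trans one_pos hl
  intro n
  induction n using Int.induction_on with
  | zero => intro y s; simp
  | succ k ih =>
      intro y s
      have h1 : (l : ℝ) ^ ((k : ℤ) + 1) = l * l ^ (k : ℤ) := by
        rw [zpow_add_one₀ (ne_of_gt hl0)]; ring
      rw [h1, mul_smul, mul_assoc, dss_step v₀ l hl hdss, ih y s]; ring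
  | pred k ih =>
      intro y s
      have h1 : (l : ℝ) ^ (-(k : ℤ) - 1) = (l ^ (-(k:ℤ)))* l⁻¹ :=
        zpow_sub_one₀ (ne_of_gt hl0) _
      have hm : l * l ^ (-(k:ℤ)-1) = l ^ (-(k:ℤ)) := by
        rw [mul_comm, h1]; field_simp
      have key := dss_step v₀ l hl hdss ((l ^ (-(k:ℤ)-1)) • y) (l ^ (-(k:ℤ)-1) * s)
      have h2 : l • (l ^ (-(k:ℤ)-1)) • y = (l ^ (-(k:ℤ))) • y := by
        rw [smul_smul, hm]
      have h3 : l * (l ^ (-(k:ℤ)-1) * s) = l ^ (-(k:ℤ)) * s := by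
        rw [← mul_assoc, hm]
      rw [h2, h3, ih y s] at key
      have : ∫ x in ball ((l ^ (-(k:ℤ)-1)) • y) (l ^ (-(k:ℤ)-1) * s), ‖v₀ x‖^2
          = l⁻¹ * (l ^ (-(k:ℤ)) * ∫ x in ball y s, ‖v₀ x‖^2) := by
        rw [key]; field_simp
      rw [this, h1]; ring

set_option maxHeartbeats 1000000 in
theorem dss_small_scaled_energy (v₀ : E3 → E3) (l Rstar ε : ℝ)
    (hl : 1 < l) (hR : 0 < Rstar) (hε : 0 < ε)
    (hloc : ∀ (x : E3) (r : ℝ), IntegrableOn (fun y => ‖v₀ y‖^2) (ball x r))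
    (hdss : ∀ᵐ x : E3, v₀ x = l • v₀ (l • x))
    (hsmall : ∀ x : E3, Rstar ≤ ‖x‖ → ∫ y in ball x 1, ‖v₀ y‖^2 ≤ ε / l) :
    ∀ x₀ : E3, x₀ ≠ 0 → ∀ r : ℝ, 0 < r → r ≤ (1/(l * Rstar)) * ‖x₀‖ →
      (1/r) * ∫ y in ball x₀ r, ‖v₀ y‖^2 ≤ ε := by
  intro x₀ hx₀ r hr hrle
  have hl0 : (0:ℝ) < l := lt_trans one_pos hl
  obtain ⟨n, hn1, hn2⟩ := exists_mem_Ico_zpow (x := 1/r) (y := l)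
    (by positivity) hl
  set c : ℝ := l ^ n with hc
  have hc0 : 0 < c := zpow_pos hl0 _
  set R : ℝ := c * r with hRdef
  have hR0 : 0 < R := mul_pos hc0 hr
  have hR1 : R ≤ 1 := by
    have : c ≤ 1/r := hn1
    calc R = c * r := rfl
    _ ≤ (1/r) * r := by nlinarith
    _ = 1 := by field_simp
  have hlR : 1 < l * R := by
    have h2 : (1:ℝ)/r < l ^ (n+1) := hn2
    have : l ^ (n+1) = l * c := by rw [zpow_add_one₀ (ne_of_gt hl0)]; ring
    rw [this] at h2
    have := (div_lt_iff₀ hr).mp h2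
    nlinarith
  set X : E3 := c • x₀ with hX
  have hXnorm : ‖X‖ = c * ‖x₀‖ := by
    rw [hX, norm_smul, Real.norm_eq_abs, abs_of_pos hc0]
  have hx₀norm : l * Rstar * r ≤ ‖x₀‖ := by
    have hlR0 : 0 < l * Rstar := mul_pos hl0 hR
    rw [one_div] at hrle
    calc l * Rstar * r ≤ l * Rstar * ((l*Rstar)⁻¹ * ‖x₀‖) := by nlinarith
    _ = ‖x₀‖ := by field_simp
  have hXbig : Rstar ≤ ‖X‖ := by
    rw [hXnorm]
    calc Rstar = Rstar * 1 := by ring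
    _ ≤ Rstar * (l * R) := by nlinarith
    _ = c * (l * Rstar * r) := by rw [hRdef]; ring
    _ ≤ c * ‖x₀‖ := by nlinarith
  have hkey := dss_zstep v₀ l hl hdss n x₀ r
  have hmono : ∫ x in ball X R, ‖v₀ x‖^2 ≤ ∫ x in ball X 1, ‖v₀ x‖^2 := by
    refine setIntegral_mono_set (hloc X 1) ?_ ?_
    · filter_upwards with x using by positivity
    · exact Filter.Eventually.of_forall (ball_subset_ball hR1)
  have hsm := hsmall X hXbig
  have hpos : 0 ≤ ∫ x in ball x₀ r, ‖v₀ x‖^2 :=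
    setIntegral_nonneg measurableSet_ball (fun x _ => by positivity)
  -- ∫ in ball X R = c * ∫ in ball x₀ r
  have hint : ∫ x in ball X R, ‖v₀ x‖^2 = c * ∫ x in ball x₀ r, ‖v₀ x‖^2 := hkey
  have hεl : 0 < ε / l := div_pos hε hl0
  -- (1/r) * ∫ = (1/R) * ∫_{B_R}
  have heq : (1/r) * ∫ x in ball x₀ r, ‖v₀ x‖^2 = (1/R) * ∫ x in ball X R, ‖v₀ x‖^2 := by
    rw [hint, hRdef]; field_simp
  rw [heq]
  have h1R : 1/R < l := by
    rw [div_lt_iff₀ hR0]; nlinarith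
  calc (1/R) * ∫ x in ball X R, ‖v₀ x‖^2
      ≤ (1/R) * ∫ x in ball X 1, ‖v₀ x‖^2 := by
        have : 0 < 1/R := by positivity
        nlinarith
    _ ≤ (1/R) * (ε / l) := by
        have : 0 < 1/R := by positivity
        nlinarith
    _ ≤ l * (ε / l) := by nlinarith
    _ = ε := by field_simp
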